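/- Let l ≥ 1 be a squarefree integer and let d be an integer with gcd(l, 2d) = 1. Then Σ_{0 ≤ x < l, l ∣ x² − d²} e((x³ − 3d²x)/l²) = Σ_{l₁·l₂ = l, l₁, l₂ ≥ 1} e(2d³·(\bar{l₁²}/l₂² − \bar{l₂²}/l₁²)), where \bar{l₁²} denotes any integer inverse of l₁² modulo l₂² and \bar{l₂²} denotes any integer inverse of l₂² modulo l₁² (the summands on the right do not depend on these choices of inverses). -/

import Mathlib

/-- `e(x) = exp(2πix)`. -/
noncomputable def e (x : ℝ) : ℂ := Complex.exp (2 * Real.pi * Complex.I * x)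

lemma e_add_int (x : ℝ) (k : ℤ) : e (x + k) = e x := by
  unfold e
  rw [Complex.ofReal_add, mul_add, Complex.exp_add,
    show (2 * (Real.pi:ℂ) * Complex.I * ((k:ℝ):ℂ)) = (k:ℤ) * (2*(Real.pi:ℂ)*Complex.I) by push_cast; ring,
    Complex.exp_int_mul_two_pi_mul_I, mul_one]

lemma key_dvd (l₁ l₂ x d u v : ℤ) (hc : IsCoprime l₁ l₂)
    (h1 : l₁ ∣ x - d) (h2 : l₂ ∣ x + d)
    (hu : l₂^2 ∣ l₁^2*u - 1) (hv : l₁^2 ∣ l₂^2*v - 1) :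
    (l₁*l₂)^2 ∣ (x^3 - 3*d^2*x) - (2*d^3*u*l₁^2 - 2*d^3*v*l₂^2) := by
  have hc2 : IsCoprime (l₁^2) (l₂^2) := hc.pow
  rw [mul_pow]
  refine hc2.mul_dvd ?_ ?_
  · obtain ⟨a, ha⟩ := h1
    obtain ⟨w, hw⟩ := hv
    have hx : x = d + l₁ * a := by linarith
    subst hx
    exact ⟨3*d*a^2 + l₁*a^3 - 2*d^3*u + 2*d^3*w, by linear_combination 2*d^3*hw⟩
  · obtain ⟨b, hb⟩ := h2
    obtain ⟨w, hw⟩ := hu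
    have hx : x = -d + l₂ * b := by linarith
    subst hx
    exact ⟨-3*d*b^2 + l₂*b^3 + 2*d^3*v - 2*d^3*w, by linear_combination (-2)*d^3*hw⟩

/-- If `l₁ ∣ x - d` and `l₂ ∣ x + d` with `l = l₁ * l₂` and `gcd(l, 2d) = 1`, then
`gcd(l, x - d) = l₁`. -/
lemma gcd_eq_of (l l₁ l₂ : ℕ) (d x : ℤ) (hcop : Int.gcd (l:ℤ) (2*d) = 1)
    (hll : l = l₁ * l₂) (h1 : (l₁:ℤ) ∣ x - d) (h2 : (l₂:ℤ) ∣ x + d) :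
    Int.gcd (l:ℤ) (x - d) = l₁ := by
  set g := Nat.gcd l₂ (x - d).natAbs with hg
  have hg2 : (g:ℤ) ∣ x - d := Int.dvd_natAbs.mp (Int.ofNat_dvd.mpr (Nat.gcd_dvd_right _ _))
  have hgl2 : (g:ℤ) ∣ (l₂:ℤ) := Int.ofNat_dvd.mpr (Nat.gcd_dvd_left _ _)
  have hg3 : (g:ℤ) ∣ x + d := hgl2.trans h2
  have hg4 : (g:ℤ) ∣ 2*d := by
    have := dvd_sub hg3 hg2; simpa [show x + d - (x - d) = 2*d by ring] using this
  have hg5 : (g:ℤ) ∣ (l:ℤ) := hgl2.trans (by exact_mod_cast Dvd.intro_left l₁ hll.symm)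
  have hg1 : g = 1 := by
    have h6 := Int.dvd_gcd hg5 hg4
    rw [hcop] at h6
    exact Nat.dvd_one.mp (by exact_mod_cast h6)
  have hcop2 : Nat.Coprime l₂ (x - d).natAbs := hg1
  have : Int.gcd (l:ℤ) (x - d) = Nat.gcd (l₁ * l₂) (x - d).natAbs := by
    rw [hll]; rfl
  have hdn : l₁ ∣ (x - d).natAbs := by
    have := Int.natAbs_dvd_natAbs.mpr h1
    simpa using this
  rw [this, Nat.Coprime.gcd_mul_right_cancel l₁ hcop2, Nat.gcd_eq_left hdn]

/-- Facts about `l₁ := gcd(l, x-d)` for a solution `x` of `x² ≡ d² (mod l)`. -/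
lemma gcd_facts (l : ℕ) (hl0 : l ≠ 0) (hsf : Squarefree l) (d x : ℤ)
    (hcop : Int.gcd (l:ℤ) (2*d) = 1)
    (hx : (l:ℤ) ∣ x^2 - d^2) :
    Int.gcd (l:ℤ) (x - d) ∣ l ∧ ((Int.gcd (l:ℤ) (x - d) : ℕ):ℤ) ∣ x - d ∧
      ((l / Int.gcd (l:ℤ) (x - d) : ℕ):ℤ) ∣ x + d := by
  set l₁ := Int.gcd (l:ℤ) (x - d) with hl₁
  have hdl : l₁ ∣ l := Int.ofNat_dvd.mp (by exact_mod_cast (Int.gcd_dvd_left _ _ : (l₁:ℤ) ∣ (l:ℤ)))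
  have hdxd : (l₁:ℤ) ∣ x - d := Int.gcd_dvd_right _ _
  set l₂ := l / l₁ with hl₂
  have hll : l = l₁ * l₂ := (Nat.mul_div_cancel' hdl).symm
  have hcp : Nat.Coprime l₁ l₂ := by
    have := hsf; rw [hll] at this; exact (Nat.squarefree_mul_iff.mp this).1
  refine ⟨hdl, hdxd, ?_⟩
  -- l₂ is coprime to x - d
  set g := Nat.gcd l₂ (x - d).natAbs with hg
  have hg2 : (g:ℤ) ∣ x - d := Int.dvd_natAbs.mp (Int.ofNat_dvd.mpr (Nat.gcd_dvd_right _ _))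
  have hgl2 : g ∣ l₂ := Nat.gcd_dvd_left _ _
  have hgl : (g:ℤ) ∣ (l:ℤ) := by
    exact_mod_cast Int.ofNat_dvd.mpr (hgl2.trans ⟨l₁, by rw [hll]; ring⟩)
  have hgl1 : g ∣ l₁ := by
    have : (g:ℤ) ∣ (Int.gcd (l:ℤ) (x - d) : ℤ) := Int.dvd_coe_gcd hgl hg2
    exact_mod_cast this
  have hg1 : g = 1 := Nat.eq_one_of_dvd_coprimes hcp hgl1 hgl2
  have hcpi : IsCoprime (l₂:ℤ) (x - d) := by
    rw [Int.isCoprime_iff_gcd_eq_one]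
    exact hg1
  have hdvd2 : (l₂:ℤ) ∣ (x - d) * (x + d) := by
    have h2l : (l₂:ℤ) ∣ (l:ℤ) := Int.ofNat_dvd.mpr ⟨l₁, by rw [hll]; ring⟩
    exact h2l.trans (by rw [show (x-d)*(x+d) = x^2 - d^2 by ring]; exact hx)
  exact hcpi.dvd_of_dvd_mul_left hdvd2

/-- Let `l ≥ 1` be squarefree and `d` an integer with `gcd(l, 2d) = 1`. For any choices
`u l₁` of an integer inverse of `l₁²` modulo `(l/l₁)²` and `v l₁` of an integer inverse
of `(l/l₁)²` modulo `l₁²`, one has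
`Σ_{0 ≤ x < l, l ∣ x² − d²} e((x³ − 3d²x)/l²)
  = Σ_{l₁ l₂ = l} e(2d³ (u l₁/l₂² − v l₁/l₁²))`. -/
theorem squarefree_modulus_sum_factorization (l : ℕ) (hl : 1 ≤ l) (hsf : Squarefree l)
    (d : ℤ) (hcop : Int.gcd (l : ℤ) (2 * d) = 1)
    (u v : ℕ → ℤ)
    (hu : ∀ l₁ : ℕ, l₁ ∣ l → (((l / l₁ : ℕ) : ℤ)) ^ 2 ∣ (l₁ : ℤ) ^ 2 * u l₁ - 1)
    (hv : ∀ l₁ : ℕ, l₁ ∣ l → ((l₁ : ℤ)) ^ 2 ∣ (((l / l₁ : ℕ) : ℤ)) ^ 2 * v l₁ - 1) :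
    ∑ x ∈ Finset.filter (fun x : ℕ => (l : ℤ) ∣ (x : ℤ) ^ 2 - d ^ 2) (Finset.range l),
      e (((x : ℝ) ^ 3 - 3 * (d : ℝ) ^ 2 * (x : ℝ)) / (l : ℝ) ^ 2) =
    ∑ l₁ ∈ l.divisors,
      e (2 * (d : ℝ) ^ 3 *
        ((u l₁ : ℝ) / ((l / l₁ : ℕ) : ℝ) ^ 2 - (v l₁ : ℝ) / (l₁ : ℝ) ^ 2)) := by
  have hl0 : l ≠ 0 := by omega
  refine Finset.sum_bij (fun (x : ℕ) (_ : x ∈ _) => Int.gcd (l:ℤ) ((x:ℤ) - d)) ?_ ?_ ?_ ?_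
  · -- maps into divisors
    intro x hx
    rw [Finset.mem_filter] at hx
    exact Nat.mem_divisors.mpr ⟨(gcd_facts l hl0 hsf d x hcop hx.2).1, hl0⟩
  · -- injective
    intro x hx y hy hxy
    rw [Finset.mem_filter, Finset.mem_range] at hx hy
    obtain ⟨h1x, h2x, h3x⟩ := gcd_facts l hl0 hsf d x hcop hx.2
    obtain ⟨h1y, h2y, h3y⟩ := gcd_facts l hl0 hsf d y hcop hy.2
    have hxy' : Int.gcd (l:ℤ) ((x:ℤ) - d) = Int.gcd (l:ℤ) ((y:ℤ) - d) := hxy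
    set l₁ := Int.gcd (l:ℤ) ((x:ℤ) - d) with hl₁
    rw [← hxy'] at h2y h3y
    have hll : l = l₁ * (l / l₁) := (Nat.mul_div_cancel' h1x).symm
    have hcp : Nat.Coprime l₁ (l / l₁) := by
      have := hsf; rw [hll] at this; exact (Nat.squarefree_mul_iff.mp this).1
    have hd1 : (l₁:ℤ) ∣ (x:ℤ) - y := by
      have := dvd_sub h2x h2y; simpa [show (x:ℤ) - d - ((y:ℤ) - d) = x - y by ring] using this
    have hd2 : ((l / l₁ : ℕ):ℤ) ∣ (x:ℤ) - y := by
      have := dvd_sub h3x h3y; simpa [show (x:ℤ) + d - ((y:ℤ) + d) = x - y by ring] using this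
    have hdl : (l:ℤ) ∣ (x:ℤ) - y := by
      have := (Nat.isCoprime_iff_coprime.mpr hcp).mul_dvd hd1 hd2
      rwa [show ((l₁:ℤ)) * ((l / l₁ : ℕ):ℤ) = (l:ℤ) by exact_mod_cast congrArg (Nat.cast (R := ℤ)) hll.symm] at this
    have : (x:ℤ) - y = 0 := Int.eq_zero_of_abs_lt_dvd hdl (by
      rw [abs_sub_lt_iff]; constructor <;> [skip; skip] <;> push_cast <;> omega)
    omega
  · -- surjective
    intro l₁ hl₁
    rw [Nat.mem_divisors] at hl₁
    obtain ⟨hdl, -⟩ := hl₁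
    set l₂ := l / l₁ with hl₂
    have hll : l = l₁ * l₂ := (Nat.mul_div_cancel' hdl).symm
    have hcp : Nat.Coprime l₁ l₂ := by
      have := hsf; rw [hll] at this; exact (Nat.squarefree_mul_iff.mp this).1
    obtain ⟨m, n, hmn⟩ := (Nat.isCoprime_iff_coprime.mpr hcp)
    set y : ℤ := d * n * l₂ - d * m * l₁ with hy
    have hy1 : (l₁:ℤ) ∣ y - d := ⟨-2*d*m, by linear_combination d * hmn⟩
    have hy2 : (l₂:ℤ) ∣ y + d := ⟨2*d*n, by linear_combination (-d) * hmn⟩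
    have hlpos : (0:ℤ) < (l:ℤ) := by exact_mod_cast hl
    set x : ℤ := y % (l:ℤ) with hx
    have hx0 : 0 ≤ x := Int.emod_nonneg y (by positivity)
    have hxl : x < l := Int.emod_lt_of_pos y hlpos
    have hyx : (l:ℤ) ∣ y - x := Int.dvd_self_sub_of_emod_eq rfl
    have hx1 : (l₁:ℤ) ∣ x - d := by
      have h := dvd_sub hy1 ((Int.ofNat_dvd.mpr ⟨l₂, hll⟩).trans hyx)
      simpa [show y - d - (y - x) = x - d by ring] using h
    have hx2 : (l₂:ℤ) ∣ x + d := by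
      have h := dvd_sub hy2 ((Int.ofNat_dvd.mpr ⟨l₁, by rw [hll]; ring⟩).trans hyx)
      simpa [show y + d - (y - x) = x + d by ring] using h
    refine ⟨x.toNat, ?_, ?_⟩
    · rw [Finset.mem_filter, Finset.mem_range]
      have hxt : ((x.toNat : ℕ):ℤ) = x := Int.toNat_of_nonneg hx0
      constructor
      · exact_mod_cast (by rw [hxt]; exact_mod_cast hxl : ((x.toNat:ℕ):ℤ) < (l:ℤ))
      · rw [hxt, show x^2 - d^2 = (x - d)*(x + d) by ring, hll]
        push_cast
        exact mul_dvd_mul hx1 hx2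
    · show Int.gcd (l:ℤ) (((x.toNat : ℕ):ℤ) - d) = l₁
      rw [Int.toNat_of_nonneg hx0]
      exact gcd_eq_of l l₁ l₂ d x hcop hll hx1 hx2
  · -- values agree
    intro x hx
    rw [Finset.mem_filter, Finset.mem_range] at hx
    obtain ⟨h1, h2, h3⟩ := gcd_facts l hl0 hsf d x hcop hx.2
    set l₁ := Int.gcd (l:ℤ) ((x:ℤ) - d) with hl₁
    set l₂ := l / l₁ with hl₂
    have hll : l = l₁ * l₂ := (Nat.mul_div_cancel' h1).symm
    have hcp : Nat.Coprime l₁ l₂ := by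
      have := hsf; rw [hll] at this; exact (Nat.squarefree_mul_iff.mp this).1
    have h1pos : l₁ ≠ 0 := (Nat.pos_of_dvd_of_pos h1 (by omega)).ne'
    have h2pos : l₂ ≠ 0 := by intro h0; rw [h0, mul_zero] at hll; exact hl0 hll
    have hkey := key_dvd (l₁:ℤ) (l₂:ℤ) (x:ℤ) d (u l₁) (v l₁)
      (Nat.isCoprime_iff_coprime.mpr hcp) h2 h3 (hu l₁ h1) (hv l₁ h1)
    obtain ⟨k, hk⟩ := hkey
    have hk2 : ((x:ℤ)^3 - 3*d^2*(x:ℤ)) = (2*d^3*(u l₁)*(l₁:ℤ)^2 - 2*d^3*(v l₁)*(l₂:ℤ)^2) + ((l₁:ℤ)*(l₂:ℤ))^2 * k := by linarith [hk]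
    have hkr : ((x:ℝ)^3 - 3*(d:ℝ)^2*(x:ℝ)) =
        (2*(d:ℝ)^3*(u l₁) * (l₁:ℝ)^2 - 2*(d:ℝ)^3*(v l₁)*(l₂:ℝ)^2) + ((l₁:ℝ)*(l₂:ℝ))^2 * (k:ℝ) := by
      exact_mod_cast hk2
    have hlr : (l:ℝ) = (l₁:ℝ) * (l₂:ℝ) := by exact_mod_cast congrArg (Nat.cast (R := ℝ)) hll
    have h1r : (l₁:ℝ) ≠ 0 := Nat.cast_ne_zero.mpr h1pos
    have h2r : (l₂:ℝ) ≠ 0 := Nat.cast_ne_zero.mpr h2pos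
    have : ((x : ℝ) ^ 3 - 3 * (d : ℝ) ^ 2 * (x : ℝ)) / (l : ℝ) ^ 2 =
        2 * (d : ℝ) ^ 3 * ((u l₁ : ℝ) / (l₂ : ℝ) ^ 2 - (v l₁ : ℝ) / (l₁ : ℝ) ^ 2) + (k:ℤ) := by
      rw [hlr, hkr]
      field_simp
    rw [this, e_add_int]
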